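/- If U : ℝ → ℝ is smooth, satisfies (σ₂μ² − ν) U' + (σ₁ U^{2q} + (a+b)μ U^q) U' + U''' = 0 with q a positive integer, and U, U', U'' → 0 as ξ → −∞, then U satisfies the first integral (U')² = (ν − σ₂μ²) U² − (σ₁/((q+1)(2q+1))) U^{2q+2} − (2(a+b)μ/((q+1)(q+2))) U^{q+2}. -/

import Mathlib

open Filter

lemma zero_of_hasDerivAt_zero (f : ℝ → ℝ) (hf : ∀ x, HasDerivAt f 0 x)
    (h : Tendsto f atBot (nhds 0)) : ∀ x, f x = 0 := by
  have hc : ∀ x y, f x = f y :=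
    is_const_of_deriv_eq_zero (fun x => (hf x).differentiableAt)
      (fun x => (hf x).deriv)
  intro x
  have hfun : f = fun _ => f x := funext fun y => hc y x
  rw [hfun] at h
  exact tendsto_nhds_unique tendsto_const_nhds h

/-- If U is C³, satisfies (σ₂μ² − ν)U' + (σ₁U^{2q} + (a+b)μU^q)U' + U''' = 0,
and U, U', U'' → 0 as ξ → −∞, then U satisfies the first integral
(U')² = (ν − σ₂μ²)U² − (σ₁/((q+1)(2q+1)))U^{2q+2} − (2(a+b)μ/((q+1)(q+2)))U^{q+2}. -/
theorem stmt7 (q : ℕ) (hq : 0 < q) (a b μ ν σ₁ σ₂ : ℝ)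
    (hσ₁ : σ₁ = 1 ∨ σ₁ = -1) (hσ₂ : σ₂ = 1 ∨ σ₂ = -1)
    (U : ℝ → ℝ) (hU : ContDiff ℝ 3 U)
    (hode : ∀ ξ : ℝ,
      (σ₂ * μ ^ 2 - ν) * deriv U ξ
        + (σ₁ * U ξ ^ (2 * q) + (a + b) * μ * U ξ ^ q) * deriv U ξ
        + iteratedDeriv 3 U ξ = 0)
    (h0 : Filter.Tendsto U Filter.atBot (nhds 0))
    (h1 : Filter.Tendsto (deriv U) Filter.atBot (nhds 0))
    (h2 : Filter.Tendsto (iteratedDeriv 2 U) Filter.atBot (nhds 0)) :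
    ∀ ξ : ℝ, (deriv U ξ) ^ 2
      = (ν - σ₂ * μ ^ 2) * U ξ ^ 2
        - (σ₁ / (((q : ℝ) + 1) * (2 * (q : ℝ) + 1))) * U ξ ^ (2 * q + 2)
        - (2 * (a + b) * μ / (((q : ℝ) + 1) * ((q : ℝ) + 2))) * U ξ ^ (q + 2) := by
  have hq1 : ((q : ℝ) + 1) ≠ 0 := by positivity
  have hq2 : (2 * (q : ℝ) + 1) ≠ 0 := by positivity
  have hq3 : ((q : ℝ) + 2) ≠ 0 := by positivity
  -- differentiability facts
  have hdU : ∀ ξ, HasDerivAt U (deriv U ξ) ξ := fun ξ =>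
    ((hU.differentiable (by norm_num)) ξ).hasDerivAt
  have hd1 : ∀ ξ, HasDerivAt (deriv U) (iteratedDeriv 2 U ξ) ξ := by
    intro ξ
    have h := ((hU.differentiable_iteratedDeriv 1 (by norm_num)) ξ).hasDerivAt
    rw [iteratedDeriv_one] at h
    have : iteratedDeriv 2 U ξ = deriv (deriv U) ξ := by
      rw [iteratedDeriv_succ, iteratedDeriv_one]
    rw [this]
    exact h
  have hd2 : ∀ ξ, HasDerivAt (iteratedDeriv 2 U) (iteratedDeriv 3 U ξ) ξ := by
    intro ξ
    have h := ((hU.differentiable_iteratedDeriv 2 (by norm_num)) ξ).hasDerivAt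
    have : iteratedDeriv 3 U ξ = deriv (iteratedDeriv 2 U) ξ := by
      rw [iteratedDeriv_succ]
    rw [this]
    exact h
  -- first integration: H := U'' + (σ₂μ²−ν)U + σ₁U^{2q+1}/(2q+1) + (a+b)μU^{q+1}/(q+1) ≡ 0
  set H : ℝ → ℝ := fun ξ => iteratedDeriv 2 U ξ + (σ₂ * μ ^ 2 - ν) * U ξ
      + σ₁ / (2 * (q : ℝ) + 1) * U ξ ^ (2 * q + 1)
      + (a + b) * μ / ((q : ℝ) + 1) * U ξ ^ (q + 1) with hHdef
  have hHd : ∀ ξ, HasDerivAt H 0 ξ := by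
    intro ξ
    have h := (((hd2 ξ).add ((hdU ξ).const_mul (σ₂ * μ ^ 2 - ν))).add
        (((hdU ξ).pow (2 * q + 1)).const_mul (σ₁ / (2 * (q : ℝ) + 1)))).add
        (((hdU ξ).pow (q + 1)).const_mul ((a + b) * μ / ((q : ℝ) + 1)))
    convert h using 1
    case e'_4 => rfl
    case e'_5 => rfl
    case e'_8 => rfl
    have hode' := hode ξ
    simp only [Nat.add_sub_cancel]
    push_cast
    field_simp
    linear_combination (-1 : ℝ) * hode'
  have hHlim : Tendsto H atBot (nhds 0) := by
    have hp1 : Tendsto (fun ξ => U ξ ^ (2 * q + 1)) atBot (nhds 0) := by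
      have := h0.pow (2 * q + 1)
      simpa using this
    have hp2 : Tendsto (fun ξ => U ξ ^ (q + 1)) atBot (nhds 0) := by
      have := h0.pow (q + 1)
      simpa using this
    have := ((h2.add (h0.const_mul (σ₂ * μ ^ 2 - ν))).add
        (hp1.const_mul (σ₁ / (2 * (q : ℝ) + 1)))).add
        (hp2.const_mul ((a + b) * μ / ((q : ℝ) + 1)))
    simpa using this
  have hH : ∀ ξ, H ξ = 0 := zero_of_hasDerivAt_zero H hHd hHlim
  -- second integration
  set G : ℝ → ℝ := fun ξ => (deriv U ξ) ^ 2
      - ((ν - σ₂ * μ ^ 2) * U ξ ^ 2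
        - (σ₁ / (((q : ℝ) + 1) * (2 * (q : ℝ) + 1))) * U ξ ^ (2 * q + 2)
        - (2 * (a + b) * μ / (((q : ℝ) + 1) * ((q : ℝ) + 2))) * U ξ ^ (q + 2)) with hGdef
  have hGd : ∀ ξ, HasDerivAt G 0 ξ := by
    intro ξ
    have h := ((hd1 ξ).pow 2).sub
      (((((hdU ξ).pow 2).const_mul (ν - σ₂ * μ ^ 2)).sub
        (((hdU ξ).pow (2 * q + 2)).const_mul (σ₁ / (((q : ℝ) + 1) * (2 * (q : ℝ) + 1))))).sub
        (((hdU ξ).pow (q + 2)).const_mul (2 * (a + b) * μ / (((q : ℝ) + 1) * ((q : ℝ) + 2)))))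
    convert h using 1
    case e'_4 => rfl
    case e'_5 => rfl
    case e'_8 => rfl
    have hHξ := hH ξ
    rw [hHdef] at hHξ
    have hU2 : iteratedDeriv 2 U ξ = (ν - σ₂ * μ ^ 2) * U ξ
        - σ₁ / (2 * (q : ℝ) + 1) * U ξ ^ (2 * q + 1)
        - (a + b) * μ / ((q : ℝ) + 1) * U ξ ^ (q + 1) := by linarith
    rw [show 2 * q + 2 - 1 = 2 * q + 1 by omega, show q + 2 - 1 = q + 1 by omega, hU2]
    norm_num
    push_cast
    field_simp
    ring
  have hGlim : Tendsto G atBot (nhds 0) := by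
    have hp1 : Tendsto (fun ξ => U ξ ^ (2 * q + 2)) atBot (nhds 0) := by
      have := h0.pow (2 * q + 2); simpa using this
    have hp2 : Tendsto (fun ξ => U ξ ^ (q + 2)) atBot (nhds 0) := by
      have := h0.pow (q + 2); simpa using this
    have hp3 : Tendsto (fun ξ => (deriv U ξ) ^ 2) atBot (nhds 0) := by
      have := h1.pow 2; simpa using this
    have key := hp3.sub (((h0.pow 2).const_mul (ν - σ₂ * μ ^ 2)).sub
        (hp1.const_mul (σ₁ / (((q : ℝ) + 1) * (2 * (q : ℝ) + 1)))) |>.sub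
        (hp2.const_mul (2 * (a + b) * μ / (((q : ℝ) + 1) * ((q : ℝ) + 2)))))
    norm_num at key
    exact key.congr (fun x => by simp only [hGdef]; try ring)
  have hG : ∀ ξ, G ξ = 0 := zero_of_hasDerivAt_zero G hGd hGlim
  intro ξ
  have := hG ξ
  rw [hGdef] at this
  linarith [this]
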